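/- (Tutte-Berge Formula) For every finite graph G, the minimum number of vertices left exposed by a matching of G equals the maximum over all vertex subsets S of od(S) - |S|, where od(S) is the number of odd components of G - S. -/

import Mathlib

open SimpleGraph Set

variable {V : Type*} [Fintype V] [DecidableEq V]

/-- The vertex set (in `V`) of a connected component of the graph induced on `B`. -/
def compSupp (G : SimpleGraph V) (B : Set V)
    (c : (G.induce B).ConnectedComponent) : Set V :=
  Subtype.val '' c.supp

/-- `A` is (the vertex set of) a connected component of `G` restricted to `B`. -/
def IsCompOf (G : SimpleGraph V) (B : Set V) (A : Set V) : Prop :=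
  ∃ c : (G.induce B).ConnectedComponent, A = compSupp G B c

/-- The number of odd connected components of `G` restricted to `B`. -/
noncomputable def oddComps (G : SimpleGraph V) (B : Set V) : ℕ :=
  Set.ncard {c : (G.induce B).ConnectedComponent | Odd (compSupp G B c).ncard}

/-- The deficiency `df(S) = od(S) - |S|`. -/
noncomputable def df (G : SimpleGraph V) (S : Set V) : ℤ :=
  (oddComps G Sᶜ : ℤ) - S.ncard

/-- The induced subgraph on `A` has a perfect matching. -/
def HasPM (G : SimpleGraph V) (A : Set V) : Prop :=
  ∃ M : Subgraph (G.induce A), M.IsPerfectMatching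

/-- `Df(S)`: total number of vertices in components of `G - S` with no perfect matching. -/
noncomputable def Df (G : SimpleGraph V) (S : Set V) : ℕ :=
  Set.ncard (⋃ c ∈ {c : (G.induce Sᶜ).ConnectedComponent |
    ¬ HasPM G (compSupp G Sᶜ c)}, compSupp G Sᶜ c)

/-- The set of `M`-exposed vertices. -/
def exposed (G : SimpleGraph V) (M : Subgraph G) : Set V :=
  {v | v ∉ M.support}

/-- `A` induces a factor-critical graph. -/
def FactorCritical (G : SimpleGraph V) (A : Set V) : Prop :=
  ∀ v ∈ A, HasPM G (A \ {v})

/-- The neighborhood of `T ⊆ S` in the bipartite minor `⟨G,S⟩`: the odd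
`S`-components adjacent to some vertex of `T`. -/
def minorNbhd (G : SimpleGraph V) (S T : Set V) :
    Set (G.induce Sᶜ).ConnectedComponent :=
  {c | Odd (compSupp G Sᶜ c).ncard ∧ ∃ u ∈ T, ∃ w ∈ compSupp G Sᶜ c, G.Adj u w}

/-- `S` is a Gallai-Edmonds set of `G`. -/
def GallaiEdmonds (G : SimpleGraph V) (S : Set V) : Prop :=
  (∀ c : (G.induce Sᶜ).ConnectedComponent,
      Even (compSupp G Sᶜ c).ncard → HasPM G (compSupp G Sᶜ c)) ∧
  (∀ c : (G.induce Sᶜ).ConnectedComponent,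
      Odd (compSupp G Sᶜ c).ncard → FactorCritical G (compSupp G Sᶜ c)) ∧
  (∀ T ⊆ S, T.Nonempty → T.ncard + 1 ≤ (minorNbhd G S T).ncard)

/-- `w` and `w'` lie in the same `S`-component. -/
def SameComp (G : SimpleGraph V) (S : Set V) (w w' : V) : Prop :=
  ∃ c : (G.induce Sᶜ).ConnectedComponent,
    w ∈ compSupp G Sᶜ c ∧ w' ∈ compSupp G Sᶜ c

/-- `M` is a maximum matching of `G`. -/
def IsMaximumMatching (G : SimpleGraph V) (M : Subgraph G) : Prop :=
  M.IsMatching ∧ ∀ M' : Subgraph G, M'.IsMatching →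
    M'.edgeSet.ncard ≤ M.edgeSet.ncard

set_option linter.unusedSectionVars false

section TutteBergeAux

open Function

variable {G : SimpleGraph V} {B B' B'' : Set V} {D D' : Set V}

lemma mem_compSupp {c : (G.induce B).ConnectedComponent} {x : V} :
    x ∈ compSupp G B c ↔ ∃ h : x ∈ B, (G.induce B).connectedComponentMk ⟨x, h⟩ = c := by
  constructor
  · rintro ⟨⟨a, ha⟩, hsupp, rfl⟩
    exact ⟨ha, hsupp⟩
  · rintro ⟨h, hc⟩
    exact ⟨⟨x, h⟩, hc, rfl⟩

lemma compSupp_subset (c : (G.induce B).ConnectedComponent) : compSupp G B c ⊆ B := by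
  rintro x hx
  exact (mem_compSupp.mp hx).1

lemma compSupp_nonempty (c : (G.induce B).ConnectedComponent) : (compSupp G B c).Nonempty := by
  obtain ⟨a, ha⟩ := c.exists_rep
  exact ⟨↑a, mem_compSupp.mpr ⟨a.2, ha⟩⟩

lemma compSupp_injective : Function.Injective (compSupp G B) := by
  intro c c' h
  obtain ⟨a, ha⟩ := c.exists_rep
  have h1 : (a : V) ∈ compSupp G B c := mem_compSupp.mpr ⟨a.2, ha⟩
  obtain ⟨h2, h3⟩ := mem_compSupp.mp (h ▸ h1)
  rw [← h3, ← ha]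
  congr

lemma compSupp_disjoint {c c' : (G.induce B).ConnectedComponent} (h : c ≠ c') :
    Disjoint (compSupp G B c) (compSupp G B c') := by
  rw [Set.disjoint_left]
  rintro x hx hx'
  obtain ⟨h1, h2⟩ := mem_compSupp.mp hx
  obtain ⟨h1', h2'⟩ := mem_compSupp.mp hx'
  exact h (h2.symm.trans h2')

lemma induce_adj' {x y : V} (hx : x ∈ B) (hy : y ∈ B) (h : G.Adj x y) :
    (G.induce B).Adj ⟨x, hx⟩ ⟨y, hy⟩ := by
  simpa using h

lemma compSupp_closed {c : (G.induce B).ConnectedComponent} {x y : V}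
    (hx : x ∈ compSupp G B c) (hy : y ∈ B) (hadj : G.Adj x y) :
    y ∈ compSupp G B c := by
  obtain ⟨h1, h2⟩ := mem_compSupp.mp hx
  refine mem_compSupp.mpr ⟨hy, ?_⟩
  rw [← h2]
  exact ConnectedComponent.sound (induce_adj' hy h1 hadj.symm).reachable

lemma reachable_mono (hBB' : B ⊆ B') {x y : ↥B}
    (h : (G.induce B).Reachable x y) :
    (G.induce B').Reachable ⟨x, hBB' x.2⟩ ⟨y, hBB' y.2⟩ :=
  h.map (G.induceHomOfLE hBB').toHom

lemma mem_of_reachable_induce {D : Set V}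
    (hcl : ∀ a ∈ D, ∀ b ∈ B, G.Adj a b → b ∈ D) {x y : ↥B}
    (h : (G.induce B).Reachable x y) (hx : ↑x ∈ D) : ↑y ∈ D := by
  obtain ⟨w⟩ := h
  revert hx
  induction w with
  | nil => exact id
  | @cons u v w huv p ih => exact fun hu => ih (hcl _ hu _ v.2 huv)

lemma reachable_transfer {D : Set V} (hDB' : D ⊆ B')
    (hcl : ∀ a ∈ D, ∀ b ∈ B, G.Adj a b → b ∈ D) {x y : ↥B}
    (h : (G.induce B).Reachable x y) (hx : ↑x ∈ D) :
    ∃ (hx' : ↑x ∈ B') (hy' : ↑y ∈ B'), (G.induce B').Reachable ⟨x, hx'⟩ ⟨y, hy'⟩ := by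
  obtain ⟨w⟩ := h
  revert hx
  induction w with
  | nil => exact fun hx => ⟨hDB' hx, hDB' hx, Reachable.refl _⟩
  | @cons u v w huv p ih =>
    intro hu
    have hv : ↑v ∈ D := hcl _ hu _ v.2 huv
    obtain ⟨hv', hy', hr⟩ := ih hv
    exact ⟨hDB' hu, hy',
      Reachable.trans (induce_adj' (hDB' hu) hv' huv).reachable hr⟩

lemma IsCompOf.subset (h : IsCompOf G B D) : D ⊆ B := by
  obtain ⟨c, rfl⟩ := h; exact compSupp_subset c

lemma IsCompOf.nonempty (h : IsCompOf G B D) : D.Nonempty := by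
  obtain ⟨c, rfl⟩ := h; exact compSupp_nonempty c

lemma IsCompOf.closed (h : IsCompOf G B D) :
    ∀ a ∈ D, ∀ b ∈ B, G.Adj a b → b ∈ D := by
  obtain ⟨c, rfl⟩ := h
  exact fun a ha b hb hadj => compSupp_closed ha hb hadj

lemma IsCompOf.disjoint_of_ne (h : IsCompOf G B D) (h' : IsCompOf G B D') (hne : D ≠ D') :
    Disjoint D D' := by
  obtain ⟨c, rfl⟩ := h
  obtain ⟨c', rfl⟩ := h'
  exact compSupp_disjoint (fun hcc => hne (by rw [hcc]))

lemma exists_isCompOf_mem {x : V} (hx : x ∈ B) : ∃ D, IsCompOf G B D ∧ x ∈ D :=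
  ⟨compSupp G B ((G.induce B).connectedComponentMk ⟨x, hx⟩), ⟨_, rfl⟩,
    mem_compSupp.mpr ⟨hx, rfl⟩⟩

lemma IsCompOf.eq_of_mem (h : IsCompOf G B D) (h' : IsCompOf G B D') {x : V}
    (hx : x ∈ D) (hx' : x ∈ D') : D = D' := by
  by_contra hne
  exact Set.disjoint_left.mp (h.disjoint_of_ne h' hne) hx hx'

lemma IsCompOf.of_subset (h : IsCompOf G B D) (hB' : B' ⊆ B) (hD : D ⊆ B') :
    IsCompOf G B' D := by
  obtain ⟨c, rfl⟩ := h
  obtain ⟨x, hx⟩ := compSupp_nonempty c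
  obtain ⟨hxB, hxc⟩ := mem_compSupp.mp hx
  refine ⟨(G.induce B').connectedComponentMk ⟨x, hD hx⟩, ?_⟩
  apply Set.eq_of_subset_of_subset
  · intro y hy
    obtain ⟨hyB, hyc⟩ := mem_compSupp.mp hy
    have hreach : (G.induce B).Reachable ⟨x, hxB⟩ ⟨y, hyB⟩ :=
      ConnectedComponent.exact (hxc.trans hyc.symm)
    obtain ⟨hx', hy', hr⟩ := reachable_transfer hD
      (fun a ha b hb hadj => compSupp_closed ha hb hadj) hreach hx
    exact mem_compSupp.mpr ⟨hy', (ConnectedComponent.sound hr.symm)⟩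
  · intro y hy
    obtain ⟨hyB', hyc⟩ := mem_compSupp.mp hy
    have hreach : (G.induce B').Reachable ⟨x, hD hx⟩ ⟨y, hyB'⟩ :=
      ConnectedComponent.exact hyc.symm
    have := reachable_mono hB' hreach
    refine mem_compSupp.mpr ⟨hB' hyB', ?_⟩
    rw [← hxc]
    exact (ConnectedComponent.sound this).symm

lemma IsCompOf.of_superset (h : IsCompOf G B D) (hBB'' : B ⊆ B'')
    (hcl : ∀ a ∈ D, ∀ b ∈ B'', G.Adj a b → b ∈ B) : IsCompOf G B'' D := by
  have hclD : ∀ a ∈ D, ∀ b ∈ B'', G.Adj a b → b ∈ D :=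
    fun a ha b hb hadj => h.closed a ha b (hcl a ha b hb hadj) hadj
  obtain ⟨c, rfl⟩ := h
  obtain ⟨x, hx⟩ := compSupp_nonempty c
  obtain ⟨hxB, hxc⟩ := mem_compSupp.mp hx
  refine ⟨(G.induce B'').connectedComponentMk ⟨x, hBB'' hxB⟩, ?_⟩
  apply Set.eq_of_subset_of_subset
  · intro y hy
    obtain ⟨hyB, hyc⟩ := mem_compSupp.mp hy
    have hreach : (G.induce B).Reachable ⟨x, hxB⟩ ⟨y, hyB⟩ :=
      ConnectedComponent.exact (hxc.trans hyc.symm)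
    have := reachable_mono hBB'' hreach
    exact mem_compSupp.mpr ⟨hBB'' hyB, (ConnectedComponent.sound this.symm)⟩
  · intro y hy
    obtain ⟨hyB'', hyc⟩ := mem_compSupp.mp hy
    have hreach : (G.induce B'').Reachable ⟨x, hBB'' hxB⟩ ⟨y, hyB''⟩ :=
      ConnectedComponent.exact hyc.symm
    exact mem_of_reachable_induce hclD hreach hx

lemma IsCompOf.exists_superset (h : IsCompOf G B' D) (hB' : B' ⊆ B) :
    ∃ D', IsCompOf G B D' ∧ D ⊆ D' := by
  obtain ⟨c, rfl⟩ := h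
  obtain ⟨x, hx⟩ := compSupp_nonempty c
  obtain ⟨hxB', hxc⟩ := mem_compSupp.mp hx
  refine ⟨compSupp G B ((G.induce B).connectedComponentMk ⟨x, hB' hxB'⟩), ⟨_, rfl⟩, ?_⟩
  intro y hy
  obtain ⟨hyB', hyc⟩ := mem_compSupp.mp hy
  have hreach : (G.induce B').Reachable ⟨x, hxB'⟩ ⟨y, hyB'⟩ :=
    ConnectedComponent.exact (hxc.trans hyc.symm)
  have := reachable_mono hB' hreach
  exact mem_compSupp.mpr ⟨hB' hyB', (ConnectedComponent.sound this.symm)⟩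

noncomputable def oddSupps (G : SimpleGraph V) (B : Set V) : Set (Set V) :=
  {D | IsCompOf G B D ∧ Odd D.ncard}

lemma oddComps_eq_ncard_oddSupps (G : SimpleGraph V) (B : Set V) :
    oddComps G B = (oddSupps G B).ncard := by
  rw [oddComps]
  have h : oddSupps G B = compSupp G B '' {c | Odd (compSupp G B c).ncard} := by
    ext D
    constructor
    · rintro ⟨⟨c, rfl⟩, hodd⟩; exact ⟨c, hodd, rfl⟩
    · rintro ⟨c, hodd, rfl⟩; exact ⟨⟨c, rfl⟩, hodd⟩
  rw [h, Set.ncard_image_of_injective _ compSupp_injective]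

noncomputable def oddCC {W : Type*} (H : SimpleGraph W) : ℕ :=
  Set.ncard {c : H.ConnectedComponent | Odd c.supp.ncard}

lemma oddComps_eq_oddCC {W : Type*} [Fintype W] [DecidableEq W] (H : SimpleGraph W) (B : Set W) :
    oddComps H B = oddCC (H.induce B) := by
  unfold oddComps oddCC
  congr 1
  ext c
  simp only [Set.mem_setOf_eq, compSupp,
    Set.ncard_image_of_injective _ Subtype.val_injective]

lemma oddCC_congr {W₁ W₂ : Type*} {H₁ : SimpleGraph W₁} {H₂ : SimpleGraph W₂}
    (e : H₁ ≃g H₂) : oddCC H₁ = oddCC H₂ := by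
  unfold oddCC
  have hcard : ∀ c : H₁.ConnectedComponent,
      ((e.connectedComponentEquiv) c).supp.ncard = c.supp.ncard := fun c => by
    rw [← Nat.card_coe_set_eq, ← Nat.card_coe_set_eq]
    exact (Nat.card_congr (ConnectedComponent.isoEquivSupp e c)).symm
  have himg : {c : H₂.ConnectedComponent | Odd c.supp.ncard} =
      (e.connectedComponentEquiv) '' {c | Odd c.supp.ncard} := by
    ext c'
    simp only [Set.mem_image, Set.mem_setOf_eq]
    constructor
    · intro h
      refine ⟨(e.connectedComponentEquiv).symm c', ?_, by simp⟩
      rw [← hcard]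
      simpa using h
    · rintro ⟨c, hc, rfl⟩
      rwa [hcard]
  rw [himg, Set.ncard_image_of_injective _ (e.connectedComponentEquiv).injective]

/-- The obvious isomorphism between an induced subgraph of an induced subgraph and
the corresponding directly induced subgraph. -/
noncomputable def nestIso (G : SimpleGraph V) (A : Set V) (U : Set ↥A) :
    (G.induce A).induce U ≃g G.induce (Subtype.val '' U) where
  toEquiv := Equiv.Set.image Subtype.val U Subtype.val_injective
  map_rel_iff' := by
    rintro ⟨⟨a, haA⟩, haU⟩ ⟨⟨b, hbA⟩, hbU⟩
    simp [Equiv.Set.image, Equiv.Set.imageOfInjOn]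

lemma oddComps_induce (G : SimpleGraph V) (A : Set V) (U : Set ↥A) :
    oddComps (G.induce A) U = oddComps G (Subtype.val '' U) := by
  classical
  letI : Fintype ↥A := Fintype.ofFinite _
  rw [oddComps_eq_oddCC, oddComps_eq_oddCC, oddCC_congr (nestIso G A U)]

lemma even_ncard_sUnion {𝒟 : Set (Set V)} (hdisj : 𝒟.Pairwise fun D D' => Disjoint D D')
    (heven : ∀ D ∈ 𝒟, Even D.ncard) : Even (⋃₀ 𝒟).ncard := by
  have hfin : 𝒟.Finite := Set.toFinite _
  refine Set.Finite.induction_on (motive := fun 𝒟 _ => (𝒟.Pairwise fun D D' => Disjoint D D') →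
    (∀ D ∈ 𝒟, Even D.ncard) → Even (⋃₀ 𝒟).ncard) 𝒟 hfin (by simp) ?_ hdisj heven
  clear hdisj heven
  intro D 𝒟 hD hfin ih hdisj heven
  rw [Set.sUnion_insert]
  have hdisj' : Disjoint D (⋃₀ 𝒟) := by
    rw [Set.disjoint_sUnion_right]
    intro E hE
    exact hdisj (Set.mem_insert _ _) (Set.mem_insert_of_mem _ hE)
      (by rintro rfl; exact hD hE)
  rw [Set.ncard_union_eq hdisj' (Set.toFinite _) (Set.toFinite _)]
  exact (heven D (Set.mem_insert _ _)).add
    (ih (hdisj.mono (Set.subset_insert _ _)) fun E hE => heven E (Set.mem_insert_of_mem _ hE))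

lemma exists_odd_isCompOf {G : SimpleGraph V} {B X : Set V} (hX : X ⊆ B) (hodd : Odd X.ncard)
    (hcomp : ∀ x ∈ X, ∀ D, IsCompOf G B D → x ∈ D → D ⊆ X) :
    ∃ D, IsCompOf G B D ∧ D ⊆ X ∧ Odd D.ncard := by
  by_contra hc
  push_neg at hc
  have hUnion : ⋃₀ {D | IsCompOf G B D ∧ D ⊆ X} = X := by
    apply subset_antisymm
    · rintro y ⟨D, ⟨hD1, hD2⟩, hyD⟩; exact hD2 hyD
    · intro x hx
      obtain ⟨D, hD, hxD⟩ := exists_isCompOf_mem (hX hx)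
      exact ⟨D, ⟨hD, hcomp x hx D hD hxD⟩, hxD⟩
  have hdisj : Set.Pairwise {D | IsCompOf G B D ∧ D ⊆ X} fun D D' => Disjoint D D' :=
    fun D hD D' hD' hne => hD.1.disjoint_of_ne hD'.1 hne
  have heven : ∀ D ∈ {D | IsCompOf G B D ∧ D ⊆ X}, Even D.ncard := fun D hD =>
    Nat.not_odd_iff_even.mp (fun h => hc D hD.1 hD.2 h)
  have := even_ncard_sUnion hdisj heven
  rw [hUnion] at this
  exact (Nat.not_even_iff_odd.mpr hodd) this

lemma exposed_eq (M : Subgraph G) : exposed G M = M.supportᶜ := rfl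

lemma even_ncard_support {M : Subgraph G} (hM : M.IsMatching) : Even M.support.ncard := by
  classical
  letI : Fintype ↥M.verts := Fintype.ofFinite _
  have h := hM.even_card
  rw [Set.toFinset_card] at h
  rw [hM.support_eq_verts, ← Nat.card_coe_set_eq, Nat.card_eq_fintype_card]
  exact h

lemma ncard_support_add_exposed (M : Subgraph G) :
    M.support.ncard + (exposed G M).ncard = Fintype.card V := by
  rw [exposed_eq]
  rw [Set.ncard_add_ncard_compl]
  exact Nat.card_eq_fintype_card

lemma HasPM.exists_matching {A : Set V} (h : HasPM G A) :
    ∃ N : Subgraph G, N.IsMatching ∧ N.verts = A := by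
  obtain ⟨M, hM⟩ := h
  refine ⟨{ verts := A
            Adj := fun x y => ∃ (hx : x ∈ A) (hy : y ∈ A), M.Adj ⟨x, hx⟩ ⟨y, hy⟩
            adj_sub := ?_
            edge_vert := ?_
            symm := ?_ }, ?_, rfl⟩
  · rintro v w ⟨hx, hy, hadj⟩
    exact M.adj_sub hadj
  · rintro v w ⟨hx, hy, hadj⟩
    exact hx
  · constructor; rintro v w ⟨hx, hy, hadj⟩
    exact ⟨hy, hx, hadj.symm⟩
  · intro v hv
    obtain ⟨w, hw, huniq⟩ := hM.1 (hM.2 ⟨v, hv⟩)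
    refine ⟨↑w, ⟨hv, w.2, by rw [Subtype.coe_eta]; exact hw⟩, ?_⟩
    rintro y ⟨hv', hy', hadj⟩
    exact congrArg Subtype.val (huniq ⟨y, hy'⟩ hadj)

lemma df_le_ncard_exposed {M : Subgraph G} (hM : M.IsMatching) (S : Set V) :
    df G S ≤ ((exposed G M).ncard : ℤ) := by
  classical
  rw [df, oddComps_eq_ncard_oddSupps]
  rcases Set.eq_empty_or_nonempty (oddSupps G Sᶜ) with hemp | ⟨D₀, hD₀⟩
  · rw [hemp]
    simp only [Set.ncard_empty, Nat.cast_zero]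
    have : (0 : ℤ) ≤ S.ncard := Nat.cast_nonneg _
    have : (0 : ℤ) ≤ ((exposed G M).ncard : ℤ) := Nat.cast_nonneg _
    omega
  obtain ⟨v₀, _⟩ := hD₀.1.nonempty
  have key : ∀ D ∈ oddSupps G Sᶜ, ∃ x,
      (x ∈ D ∧ x ∈ exposed G M) ∨ (x ∈ S ∧ ∃ y ∈ D, M.Adj y x) := by
    intro D hD
    by_cases hexp : ∃ x ∈ D, x ∈ exposed G M
    · obtain ⟨x, h1, h2⟩ := hexp; exact ⟨x, Or.inl ⟨h1, h2⟩⟩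
    push_neg at hexp
    by_cases hout : ∃ y ∈ D, ∃ x ∈ S, M.Adj y x
    · obtain ⟨y, hy, x, hx, hadj⟩ := hout; exact ⟨x, Or.inr ⟨hx, y, hy, hadj⟩⟩
    exfalso
    push_neg at hout
    have hMD : (M.induce D).IsMatching := by
      intro v hv
      have hv' : v ∈ D := hv
      have hsup : v ∈ M.support := by
        have := hexp v hv'
        simpa [exposed] using this
      obtain ⟨w, hw⟩ := hsup
      have hwS : w ∉ S := fun hwS => hout v hv' w hwS hw
      have hwD : w ∈ D := hD.1.closed v hv' w hwS (M.adj_sub hw)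
      refine ⟨w, ⟨hv', hwD, hw⟩, ?_⟩
      rintro y ⟨_, _, hadj⟩
      obtain ⟨w', hw', huniq⟩ := hM hw.fst_mem
      exact (huniq y hadj).trans (huniq w hw).symm
    letI : Fintype ↥(M.induce D).verts := Fintype.ofFinite _
    have heven := hMD.even_card
    rw [Set.toFinset_card] at heven
    have h3 : Even (Nat.card ↥((M.induce D).verts)) := by
      rw [Nat.card_eq_fintype_card]; exact heven
    have h4 : Even D.ncard := by
      rw [← Nat.card_coe_set_eq]
      exact h3
    exact (Nat.not_even_iff_odd.mpr hD.2) h4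
  choose g hg using key
  set f : Set V → V := fun D => if h : D ∈ oddSupps G Sᶜ then g D h else v₀ with hf
  have hinj : Set.InjOn f (oddSupps G Sᶜ) := by
    intro D hD D' hD' heq
    rw [hf] at heq
    simp only [dif_pos hD, dif_pos hD'] at heq
    rcases hg D hD with h1 | h1 <;> rcases hg D' hD' with h2 | h2
    · exact hD.1.eq_of_mem hD'.1 (heq ▸ h1.1) h2.1
    · exact absurd (h2.1) (fun hS => (hD.1.subset (heq ▸ h1.1)) (heq ▸ hS))
    · exact absurd (h1.1) (fun hS => (hD'.1.subset (heq ▸ h2.1)) (heq ▸ hS))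
    · obtain ⟨y, hy, hadj⟩ := h1.2
      obtain ⟨y', hy', hadj'⟩ := h2.2
      rw [heq] at hadj
      obtain ⟨w', hw', huniq⟩ := hM hadj.symm.fst_mem
      have : y = y' := (huniq y hadj.symm).trans (huniq y' hadj'.symm).symm
      exact hD.1.eq_of_mem hD'.1 hy (this ▸ hy')
  have hmaps : ∀ D ∈ oddSupps G Sᶜ, f D ∈ exposed G M ∪ S := by
    intro D hD
    rw [hf]
    simp only [dif_pos hD]
    rcases hg D hD with h | h
    · exact Or.inl h.2
    · exact Or.inr h.1
  have hcount : (oddSupps G Sᶜ).ncard ≤ (exposed G M ∪ S).ncard :=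
    Set.ncard_le_ncard_of_injOn f hmaps hinj (Set.toFinite _)
  have hcount2 : (exposed G M ∪ S).ncard ≤ (exposed G M).ncard + S.ncard :=
    Set.ncard_union_le _ _
  have h1 : ((oddSupps G Sᶜ).ncard : ℤ) ≤ (exposed G M).ncard + S.ncard := by
    exact_mod_cast hcount.trans hcount2
  omega

universe u

/-- The inductive statement: there is an optimal set `S` and a matching achieving `df G S`. -/
def GoodTB {W : Type u} (H : SimpleGraph W) : Prop :=
  ∃ S : Set W, (∀ S', df H S' ≤ df H S) ∧
    ∃ M : Subgraph H, M.IsMatching ∧ ((exposed H M).ncard : ℤ) = df H S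

lemma stepTB {V : Type u} [Fintype V] [DecidableEq V] (G : SimpleGraph V)
    (IH : ∀ (W : Type u) [Fintype W] [DecidableEq W] (H : SimpleGraph W),
      Fintype.card W < Fintype.card V → GoodTB H) : GoodTB G := by
  classical
  obtain ⟨S, hSmax⟩ := Finite.exists_max
    (fun S : Set V => (Fintype.card V + 1 : ℤ) * df G S + S.ncard)
  have hb1 : (S.ncard : ℤ) ≤ Fintype.card V := by
    have := Set.ncard_le_ncard (Set.subset_univ S) (Set.toFinite _)
    rw [Set.ncard_univ, Nat.card_eq_fintype_card] at this
    exact_mod_cast this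
  have hdf : ∀ S', df G S' ≤ df G S := by
    intro S'
    by_contra hlt
    push_neg at hlt
    have h1 := hSmax S'
    have hb2 : (0 : ℤ) ≤ S'.ncard := Nat.cast_nonneg _
    have hmul : (Fintype.card V + 1 : ℤ) * (df G S + 1) ≤ (Fintype.card V + 1 : ℤ) * df G S' :=
      mul_le_mul_of_nonneg_left (by omega) (by positivity)
    have hexp : (Fintype.card V + 1 : ℤ) * (df G S + 1) =
        (Fintype.card V + 1 : ℤ) * df G S + (Fintype.card V + 1) := by ring
    linarith
  have hcard : ∀ S', df G S' = df G S → S'.ncard ≤ S.ncard := by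
    intro S' he
    have h1 := hSmax S'
    rw [he] at h1
    exact_mod_cast (by linarith : (S'.ncard : ℤ) ≤ S.ncard)
  rcases isEmpty_or_nonempty V with hV | hV
  · refine ⟨S, hdf, ⊥, fun v _ => isEmptyElim v, ?_⟩
    have h1 : exposed G ⊥ = ∅ := Set.eq_empty_of_isEmpty _
    haveI : IsEmpty ↥(Sᶜ) := ⟨fun x => isEmptyElim (x : V)⟩
    have h2 : {c : (G.induce Sᶜ).ConnectedComponent | Odd (compSupp G Sᶜ c).ncard} = ∅ :=
      Set.eq_empty_of_isEmpty _
    have h3 : S = ∅ := Set.eq_empty_of_isEmpty _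
    rw [df, oddComps, h1, h2, h3]
    simp
  set B := Sᶜ with hB
  -- Claim 1 : all components of `G - S` are odd
  have hodd : ∀ D, IsCompOf G B D → Odd D.ncard := by
    intro D hD
    by_contra hev
    rw [Nat.not_odd_iff_even] at hev
    obtain ⟨v, hv⟩ := hD.nonempty
    have hvB : v ∈ B := hD.subset hv
    have hS'c : (insert v S)ᶜ = B \ {v} := by
      ext x; simp [hB, Set.mem_diff, and_comm]
    have hDv_odd : Odd (D \ {v}).ncard := by
      rw [Set.ncard_diff_singleton_of_mem hv]
      have h1 : 0 < D.ncard := (Set.ncard_pos (Set.toFinite _)).mpr hD.nonempty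
      obtain ⟨k, hk⟩ := hev
      exact ⟨k - 1, by omega⟩
    have hsub : D \ {v} ⊆ B \ {v} := Set.diff_subset_diff_left hD.subset
    have hcompin : ∀ x ∈ D \ {v}, ∀ E, IsCompOf G (B \ {v}) E → x ∈ E → E ⊆ D \ {v} := by
      intro x hx E hE hxE
      obtain ⟨E', hE', hEE'⟩ := hE.exists_superset Set.diff_subset
      have hE'D : E' = D := hE'.eq_of_mem hD (hEE' hxE) hx.1
      intro y hy
      exact ⟨hE'D ▸ hEE' hy, (hE.subset hy).2⟩
    obtain ⟨D₀, hD₀comp, hD₀sub, hD₀odd⟩ := exists_odd_isCompOf hsub hDv_odd hcompin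
    have hgrow : insert D₀ (oddSupps G B) ⊆ oddSupps G (B \ {v}) := by
      rintro E (rfl | hE)
      · exact ⟨hD₀comp, hD₀odd⟩
      · refine ⟨hE.1.of_subset Set.diff_subset ?_, hE.2⟩
        have hED : E ≠ D := fun h => (Nat.not_even_iff_odd.mpr (h ▸ hE.2)) hev
        intro y hy
        refine ⟨hE.1.subset hy, fun (h : y ∈ ({v} : Set V)) =>
          Set.disjoint_left.mp (hE.1.disjoint_of_ne hD hED) hy (h ▸ hv)⟩
    have hD₀new : D₀ ∉ oddSupps G B := by
      intro hmem
      obtain ⟨x₀, hx₀⟩ := hD₀comp.nonempty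
      have hD₀D : D₀ = D := hmem.1.eq_of_mem hD hx₀ (hD₀sub hx₀).1
      exact (Nat.not_even_iff_odd.mpr (hD₀D ▸ hD₀odd)) hev
    have hcount : (oddSupps G B).ncard + 1 ≤ (oddSupps G (B \ {v})).ncard := by
      have h1 := Set.ncard_le_ncard hgrow (Set.toFinite _)
      rwa [Set.ncard_insert_of_notMem hD₀new (Set.toFinite _)] at h1
    have hvS : v ∉ S := hvB
    have hS'card : (insert v S).ncard = S.ncard + 1 :=
      Set.ncard_insert_of_notMem hvS (Set.toFinite _)
    have hdfS' : df G S ≤ df G (insert v S) := by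
      rw [df, df, oddComps_eq_ncard_oddSupps, oddComps_eq_ncard_oddSupps, hS'c, hS'card, ← hB]
      have hc' : ((oddSupps G B).ncard : ℤ) + 1 ≤ ((oddSupps G (B \ {v})).ncard : ℤ) := by
        exact_mod_cast hcount
      push_cast
      omega
    have := hcard (insert v S) (le_antisymm (hdf _) hdfS')
    omega
  -- Claim 2 : all components of `G - S` are factor-critical
  have hfc : ∀ D, IsCompOf G B D → ∀ v ∈ D, HasPM G (D \ {v}) := by
    intro D hD v hv
    by_contra hnpm
    set A := D \ {v} with hA
    letI : Fintype ↥A := Fintype.ofFinite _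
    have hAcard : Fintype.card ↥A < Fintype.card V := by
      rw [← Nat.card_eq_fintype_card, Nat.card_coe_set_eq]
      have h1 : A ⊂ Set.univ := by
        rw [Set.ssubset_univ_iff]
        intro h
        have : v ∈ A := h ▸ Set.mem_univ v
        exact this.2 rfl
      have := Set.ncard_lt_ncard h1 (Set.toFinite _)
      rwa [Set.ncard_univ, Nat.card_eq_fintype_card] at this
    obtain ⟨S₁, hS₁max, M₁, hM₁, hM₁eq⟩ := IH ↥A (G.induce A) hAcard
    have hexp_ne : (exposed (G.induce A) M₁).Nonempty := by
      rw [Set.nonempty_iff_ne_empty]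
      intro hempty
      apply hnpm
      refine ⟨M₁, hM₁, fun w => ?_⟩
      have hsupp : M₁.support = Set.univ := by
        have := congrArg compl (exposed_eq M₁ ▸ hempty)
        rwa [compl_compl, Set.compl_empty] at this
      rw [← hM₁.support_eq_verts, hsupp]
      exact Set.mem_univ w
    have hDodd := hodd D hD
    have hAeven : Even (Fintype.card ↥A) := by
      rw [← Nat.card_eq_fintype_card, Nat.card_coe_set_eq, hA,
        Set.ncard_diff_singleton_of_mem hv]
      obtain ⟨k, hk⟩ := hDodd
      exact ⟨k, by omega⟩
    have hexp2 : 2 ≤ (exposed (G.induce A) M₁).ncard := by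
      have h1 : 0 < (exposed (G.induce A) M₁).ncard :=
        (Set.ncard_pos (Set.toFinite _)).mpr hexp_ne
      have hadd := ncard_support_add_exposed M₁
      obtain ⟨k, hk⟩ := even_ncard_support hM₁
      obtain ⟨n, hn⟩ := hAeven
      omega
    have hdf₁ : 2 ≤ df (G.induce A) S₁ := by
      rw [← hM₁eq]
      exact_mod_cast hexp2
    set T : Set V := Subtype.val '' S₁ with hT
    have hTA : T ⊆ A := by rintro x ⟨a, _, rfl⟩; exact a.2
    have hTcard : T.ncard = S₁.ncard := Set.ncard_image_of_injective _ Subtype.val_injective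
    have hvalcompl : Subtype.val '' (S₁ᶜ : Set ↥A) = A \ T := by
      ext x
      constructor
      · rintro ⟨a, ha, rfl⟩
        refine ⟨a.2, fun hmem => ?_⟩
        obtain ⟨b, hb, hba⟩ := hmem
        exact ha (by rwa [← Subtype.val_injective hba])
      · rintro ⟨hxA, hxT⟩
        exact ⟨⟨x, hxA⟩, fun hmem => hxT ⟨⟨x, hxA⟩, hmem, rfl⟩, rfl⟩
    have hodd₁ : oddComps (G.induce A) S₁ᶜ = (oddSupps G (A \ T)).ncard := by
      rw [oddComps_induce, hvalcompl, oddComps_eq_ncard_oddSupps]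
    have hDsubB : D ⊆ B := hD.subset
    have hvT_subD : {v} ∪ T ⊆ D := by
      rintro x (rfl | hx)
      · exact hv
      · exact (hTA hx).1
    have hDmem : D ∈ oddSupps G B := ⟨hD, hDodd⟩
    have hATsub : A \ T ⊆ B \ ({v} ∪ T) := by
      intro y hy
      exact ⟨hDsubB hy.1.1, fun hmem => hmem.elim (fun h => hy.1.2 h) (fun h => hy.2 h)⟩
    have hsurv : (oddSupps G B \ {D}) ∪ oddSupps G (A \ T) ⊆ oddSupps G (B \ ({v} ∪ T)) := by
      rintro E (⟨hE, hED⟩ | hE)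
      · refine ⟨hE.1.of_subset Set.diff_subset ?_, hE.2⟩
        intro y hy
        refine ⟨hE.1.subset hy, fun hmem => ?_⟩
        exact Set.disjoint_left.mp (hE.1.disjoint_of_ne hD (by simpa using hED)) hy
          (hvT_subD hmem)
      · refine ⟨hE.1.of_superset hATsub ?_, hE.2⟩
        intro a ha b hb hadj
        have haD : a ∈ D := (hE.1.subset ha).1.1
        have hbD : b ∈ D := hD.closed a haD b hb.1 hadj
        exact ⟨⟨hbD, fun h => hb.2 (Or.inl h)⟩, fun h => hb.2 (Or.inr h)⟩
    have hdisjoint : Disjoint (oddSupps G B \ {D}) (oddSupps G (A \ T)) := by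
      rw [Set.disjoint_left]
      rintro E ⟨hE, hED⟩ hE'
      obtain ⟨x, hx⟩ := hE'.1.nonempty
      have hxD : x ∈ D := (hE'.1.subset hx).1.1
      have hxE : x ∈ E := hx
      exact hED (by simpa using hE.1.eq_of_mem hD hxE hxD)
    have hcount : (oddSupps G B).ncard - 1 + (oddSupps G (A \ T)).ncard ≤
        (oddSupps G (B \ ({v} ∪ T))).ncard := by
      have h1 := Set.ncard_le_ncard hsurv (Set.toFinite _)
      rwa [Set.ncard_union_eq hdisjoint (Set.toFinite _) (Set.toFinite _),
        Set.ncard_diff_singleton_of_mem hDmem] at h1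
    set S' := S ∪ ({v} ∪ T) with hS'
    have hS'c : S'ᶜ = B \ ({v} ∪ T) := by
      ext x
      simp only [hS', hB, Set.mem_compl_iff, Set.mem_union, Set.mem_diff, Set.mem_singleton_iff]
      tauto
    have hvS : v ∉ S := hDsubB hv
    have hvT : v ∉ T := fun h => (hTA h).2 rfl
    have hdisjST : Disjoint S ({v} ∪ T) := by
      rw [Set.disjoint_right]
      rintro x (rfl | hx)
      · exact hvS
      · exact fun hxS => (hDsubB (hTA hx).1) hxS
    have hS'card : S'.ncard = S.ncard + (1 + T.ncard) := by
      rw [hS', Set.ncard_union_eq hdisjST (Set.toFinite _) (Set.toFinite _),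
        Set.ncard_union_eq (Set.disjoint_singleton_left.mpr hvT) (Set.toFinite _)
          (Set.toFinite _), Set.ncard_singleton]
    have hoddB_pos : 1 ≤ (oddSupps G B).ncard :=
      (Set.ncard_pos (Set.toFinite _)).mpr ⟨D, hDmem⟩
    have hod1 : (S₁.ncard : ℤ) + 2 ≤ ((oddSupps G (A \ T)).ncard : ℤ) := by
      have h2 := hdf₁
      rw [df, hodd₁] at h2
      omega
    have hfinal : df G S ≤ df G S' := by
      rw [df, df, oddComps_eq_ncard_oddSupps, oddComps_eq_ncard_oddSupps, hS'c, hS'card, ← hB,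
        hTcard]
      have hc' : ((oddSupps G B).ncard : ℤ) - 1 + ((oddSupps G (A \ T)).ncard : ℤ) ≤
          ((oddSupps G (B \ ({v} ∪ T))).ncard : ℤ) := by
        have := hcount
        omega
      push_cast
      omega
    have heqS' := hcard S' (le_antisymm (hdf _) hfinal)
    omega
  -- Claim 3 : Hall's condition and a system of distinct representatives
  letI : Fintype ↥S := Fintype.ofFinite _
  set t : ↥S → Finset (Set V) := fun s =>
    Set.Finite.toFinset (Set.toFinite {D | D ∈ oddSupps G B ∧ ∃ w ∈ D, G.Adj ↑s w}) with ht
  have hhall : ∀ (A : Finset ↥S), A.card ≤ (A.biUnion t).card := by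
    by_contra hc
    push_neg at hc
    obtain ⟨A, hA⟩ := hc
    set T : Set V := Subtype.val '' (↑A : Set ↥S) with hT
    have hTS : T ⊆ S := by rintro x ⟨a, _, rfl⟩; exact a.2
    have hTcard : T.ncard = A.card := by
      rw [hT, Set.ncard_image_of_injective _ Subtype.val_injective, Set.ncard_coe_finset]
    have hS₂c : (S \ T)ᶜ = B ∪ T := by
      ext x
      simp only [hB, Set.mem_compl_iff, Set.mem_diff, Set.mem_union]
      by_cases hx : x ∈ T
      · simp [hx, hTS hx]
      · simp [hx]
    have hsurv : oddSupps G B \ ↑(A.biUnion t) ⊆ oddSupps G (B ∪ T) := by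
      rintro E ⟨hE, hEnot⟩
      refine ⟨hE.1.of_superset Set.subset_union_left ?_, hE.2⟩
      intro a ha b hb hadj
      rcases hb with hbB | hbT
      · exact hbB
      · exfalso
        obtain ⟨s, hsA, rfl⟩ := hbT
        apply hEnot
        rw [Finset.mem_coe, Finset.mem_biUnion]
        exact ⟨s, hsA, (Set.Finite.mem_toFinset _).mpr ⟨hE, a, ha, hadj.symm⟩⟩
    have hcount : (oddSupps G B).ncard ≤ (oddSupps G (B ∪ T)).ncard + (A.biUnion t).card := by
      have h1 : (oddSupps G B).ncard ≤
          (oddSupps G B \ ↑(A.biUnion t)).ncard + (↑(A.biUnion t) : Set (Set V)).ncard := by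
        have := Set.ncard_le_ncard_diff_add_ncard (oddSupps G B)
          (↑(A.biUnion t) : Set (Set V)) (Set.toFinite _)
        exact this
      have h2 := Set.ncard_le_ncard hsurv (Set.toFinite _)
      rw [Set.ncard_coe_finset] at h1
      omega
    have hS₂card : (S \ T).ncard + T.ncard = S.ncard :=
      Set.ncard_diff_add_ncard_of_subset hTS (Set.toFinite _)
    have hlt : df G S < df G (S \ T) := by
      rw [df, df, oddComps_eq_ncard_oddSupps, oddComps_eq_ncard_oddSupps, hS₂c, ← hB]
      have h3 : ((oddSupps G B).ncard : ℤ) ≤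
          ((oddSupps G (B ∪ T)).ncard : ℤ) + (A.biUnion t).card := by exact_mod_cast hcount
      have h4 : ((S \ T).ncard : ℤ) + T.ncard = S.ncard := by exact_mod_cast hS₂card
      have h5 : ((A.biUnion t).card : ℤ) < A.card := by exact_mod_cast hA
      have h6 : (T.ncard : ℤ) = A.card := by exact_mod_cast hTcard
      omega
    exact absurd (hdf (S \ T)) (not_le.mpr hlt)
  obtain ⟨f, hfinj, hft⟩ := (Finset.all_card_le_biUnion_card_iff_existsInjective' t).mp hhall
  have hfmem : ∀ s : ↥S, f s ∈ oddSupps G B := fun s =>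
    ((Set.Finite.mem_toFinset _).mp (hft s)).1
  -- choose a distinguished vertex in each component
  have hchoice : ∀ D ∈ oddSupps G B, ∃ x ∈ D, ∀ s : ↥S, f s = D → G.Adj ↑s x := by
    intro D hD
    by_cases hrange : ∃ s : ↥S, f s = D
    · obtain ⟨s, rfl⟩ := hrange
      obtain ⟨hfs, w, hwD, hadj⟩ := (Set.Finite.mem_toFinset _).mp (hft s)
      exact ⟨w, hwD, fun s' hs' => by rw [hfinj hs']; exact hadj⟩
    · obtain ⟨x, hx⟩ := hD.1.nonempty
      exact ⟨x, hx, fun s hs => absurd ⟨s, hs⟩ hrange⟩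
  choose! xD hxD hxDadj using hchoice
  have hmatch : ∀ D ∈ oddSupps G B, ∃ N : Subgraph G, N.IsMatching ∧ N.verts = D \ {xD D} :=
    fun D hD => (hfc D hD.1 (xD D) (hxD D hD)).exists_matching
  choose! ND hND hNDverts using hmatch
  have hSadj : ∀ s : ↥S, G.Adj ↑s (xD (f s)) := fun s => hxDadj (f s) (hfmem s) s rfl
  set F : ↥(oddSupps G B) ⊕ ↥S → Subgraph G := fun i => match i with
    | Sum.inl D => ND ↑D
    | Sum.inr s => G.subgraphOfAdj (hSadj s) with hF
  have hFmatch : ∀ i, (F i).IsMatching := by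
    rintro (D | s)
    · exact hND ↑D D.2
    · exact Subgraph.IsMatching.subgraphOfAdj _
  have hvertsInl : ∀ (D : ↥(oddSupps G B)), (F (Sum.inl D)).verts = ↑D \ {xD ↑D} :=
    fun D => hNDverts ↑D D.2
  have hvertsInr : ∀ s : ↥S, (F (Sum.inr s)).verts = {↑s, xD (f s)} := fun s => rfl
  have hxDmem : ∀ (D : ↥(oddSupps G B)), xD ↑D ∈ (↑D : Set V) := fun D => hxD ↑D D.2
  have hcompsub : ∀ (D : ↥(oddSupps G B)), (↑D : Set V) ⊆ B := fun D => D.2.1.subset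
  have hxfs : ∀ s : ↥S, xD (f s) ∈ f s := fun s => hxD _ (hfmem s)
  have hfsB : ∀ s : ↥S, (f s : Set V) ⊆ B := fun s => (hfmem s).1.subset
  have hsS : ∀ s : ↥S, (↑s : V) ∉ B := fun s hb => hb s.2
  have hdisjF : Pairwise fun i j => Disjoint (F i).support (F j).support := by
    have hkey : ∀ (D : ↥(oddSupps G B)) (s' : ↥S),
        Disjoint ((↑D : Set V) \ {xD ↑D}) {(↑s' : V), xD (f s')} := by
      intro D s'
      rw [Set.disjoint_right]
      intro x hx
      simp only [Set.mem_insert_iff, Set.mem_singleton_iff] at hx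
      rcases hx with rfl | rfl
      · exact fun hmem => hsS s' (hcompsub D hmem.1)
      · intro hmem
        by_cases hfD : f s' = ↑D
        · exact hmem.2 (by rw [hfD]; exact rfl)
        · exact Set.disjoint_left.mp ((hfmem s').1.disjoint_of_ne D.2.1 hfD) (hxfs s') hmem.1
    intro i j hij
    rw [(hFmatch i).support_eq_verts, (hFmatch j).support_eq_verts]
    rcases i with D | s <;> rcases j with D' | s'
    · have hDD' : (↑D : Set V) ≠ ↑D' := fun h => hij (congrArg Sum.inl (Subtype.ext h))
      rw [hvertsInl, hvertsInl]
      exact (D.2.1.disjoint_of_ne D'.2.1 hDD').mono Set.diff_subset Set.diff_subset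
    · rw [hvertsInl, hvertsInr]
      exact hkey D s'
    · rw [hvertsInl, hvertsInr]
      exact (hkey D' s).symm
    · have hss' : s ≠ s' := fun h => hij (by rw [h])
      rw [hvertsInr, hvertsInr]
      rw [Set.disjoint_left]
      intro x hx hx'
      simp only [Set.mem_insert_iff, Set.mem_singleton_iff] at hx hx'
      rcases hx with rfl | rfl <;> rcases hx' with h2 | h2
      · exact hss' (Subtype.ext h2)
      · exact hsS s (by rw [h2]; exact hfsB s' (hxfs s'))
      · exact hsS s' (by rw [← h2]; exact hfsB s (hxfs s))
      · have hff : f s ≠ f s' := fun h => hss' (hfinj h)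
        exact Set.disjoint_left.mp ((hfmem s).1.disjoint_of_ne (hfmem s').1 hff) (hxfs s)
          (by rw [h2]; exact hxfs s')
  set M := ⨆ i, F i with hM
  have hMmatch : M.IsMatching := Subgraph.IsMatching.iSup hFmatch hdisjF
  have hMsupp : M.support = ⋃ i, (F i).verts := by
    rw [hMmatch.support_eq_verts, hM, Subgraph.verts_iSup]
  have hexposed : exposed G M = (fun D => xD D) '' (oddSupps G B \ Set.range f) := by
    ext x
    rw [exposed_eq, Set.mem_compl_iff, hMsupp]
    simp only [Set.mem_iUnion]
    constructor
    · intro hnot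
      have hxS : x ∉ S := fun hxS => hnot ⟨Sum.inr ⟨x, hxS⟩, Set.mem_insert _ _⟩
      have hxB : x ∈ B := hxS
      obtain ⟨D, hDcomp, hxD'⟩ := exists_isCompOf_mem hxB
      have hDodd' : D ∈ oddSupps G B := ⟨hDcomp, hodd D hDcomp⟩
      have hxeq : x = xD D := by
        by_contra hne
        exact hnot ⟨Sum.inl ⟨D, hDodd'⟩, by rw [hvertsInl]; exact ⟨hxD', hne⟩⟩
      refine ⟨D, ⟨hDodd', ?_⟩, hxeq.symm⟩
      rintro ⟨s, hs⟩
      refine hnot ⟨Sum.inr s, ?_⟩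
      rw [hvertsInr]
      simp only [Set.mem_insert_iff, Set.mem_singleton_iff]
      right
      rw [hs, ← hxeq]
    · rintro ⟨D, ⟨hDmem', hDrange⟩, rfl⟩ ⟨i, hi⟩
      rcases i with D' | s
      · rw [hvertsInl] at hi
        by_cases hDD' : (↑D' : Set V) = D
        · exact hi.2 (by rw [hDD']; exact rfl)
        · exact Set.disjoint_left.mp (D'.2.1.disjoint_of_ne hDmem'.1 hDD') hi.1 (hxD D hDmem')
      · rw [hvertsInr] at hi
        simp only [Set.mem_insert_iff, Set.mem_singleton_iff] at hi
        rcases hi with h2 | h2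
        · exact hsS s (by rw [← h2]; exact hDmem'.1.subset (hxD D hDmem'))
        · have hDfs : D = f s :=
            hDmem'.1.eq_of_mem (hfmem s).1 (hxD D hDmem') (by rw [h2]; exact hxfs s)
          exact hDrange ⟨s, hDfs.symm⟩
  refine ⟨S, hdf, M, hMmatch, ?_⟩
  rw [hexposed]
  have hrange_sub : Set.range f ⊆ oddSupps G B := by rintro _ ⟨s, rfl⟩; exact hfmem s
  have hrange_card : (Set.range f).ncard = S.ncard := by
    rw [← Set.image_univ, Set.ncard_image_of_injective _ hfinj, Set.ncard_univ,
      ← Nat.card_coe_set_eq]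
  have himg : ((fun D => xD D) '' (oddSupps G B \ Set.range f)).ncard =
      (oddSupps G B \ Set.range f).ncard := by
    apply Set.ncard_image_of_injOn
    intro D hD D' hD' heq
    have h1 : xD D ∈ D := hxD D hD.1
    have h2 : xD D ∈ D' := by rw [show xD D = xD D' from heq]; exact hxD D' hD'.1
    exact hD.1.1.eq_of_mem hD'.1.1 h1 h2
  rw [himg, Set.ncard_diff hrange_sub, hrange_card]
  rw [df, oddComps_eq_ncard_oddSupps]
  have hle : S.ncard ≤ (oddSupps G B).ncard := by
    rw [← hrange_card]
    exact Set.ncard_le_ncard hrange_sub (Set.toFinite _)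
  rw [← hB]
  omega

lemma mainTB : ∀ (n : ℕ) (V : Type u) [Fintype V] [DecidableEq V] (G : SimpleGraph V),
    Fintype.card V ≤ n → GoodTB G := by
  intro n
  induction n with
  | zero =>
    intro V _ _ G h
    apply stepTB
    intro W _ _ H hW
    omega
  | succ n ih =>
    intro V _ _ G h
    apply stepTB
    intro W _ _ H hW
    exact ih W H (by omega)

end TutteBergeAux

/-- The Tutte-Berge Formula: the minimum number of exposed vertices over all
matchings equals the maximum of `od(S) - |S|` over all vertex subsets `S`. -/
theorem stmt_15 (G : SimpleGraph V) :
    ∃ (M : Subgraph G) (S : Set V), M.IsMatching ∧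
      ((exposed G M).ncard : ℤ) = df G S ∧
      (∀ M' : Subgraph G, M'.IsMatching → df G S ≤ ((exposed G M').ncard : ℤ)) ∧
      (∀ S' : Set V, df G S' ≤ df G S) := by
  obtain ⟨S, hdf, M, hM, heq⟩ := mainTB (Fintype.card V) V G le_rfl
  exact ⟨M, S, hM, heq, fun M' hM' => df_le_ncard_exposed hM' S, hdf⟩
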